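/- Let f: ℝ → ℝ⁺ be integrable and bounded on compacts. For θ ∈ (0,1) define v_θ := v^{g_θ} with g_θ(x) := f(x/(1−θ))/(1−θ), i.e. v_θ(x) = ∫₀^{|x|} (∫₀ʸ exp(−2∫₀^{u/(1−θ)} f(|s|)ds) du) · exp(2∫₀^{y/(1−θ)} f(|u|)du) dy. Then for every x ∈ ℝ, lim_{θ→1} v_θ(x) = x²/2 and lim_{θ→1} v_θ'(x) = x. -/

import Mathlib

open MeasureTheory Filter

/-- `f` is bounded on every compact subset of `ℝ`. -/
def BddOnCompacts (f : ℝ → ℝ) : Prop :=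
  ∀ r : ℝ, ∃ C : ℝ, ∀ x ∈ Set.Icc (-r) r, |f x| ≤ C

/-- `v_θ = v^{g_θ}` with `g_θ(x) = f(x/(1-θ))/(1-θ)`, written out explicitly. -/
noncomputable def vtheta (f : ℝ → ℝ) (θ : ℝ) (x : ℝ) : ℝ :=
  ∫ y in (0:ℝ)..|x|,
    (∫ u in (0:ℝ)..y, Real.exp (-(2 * ∫ s in (0:ℝ)..(u / (1 - θ)), f |s|))) *
      Real.exp (2 * ∫ u in (0:ℝ)..(y / (1 - θ)), f |u|)

open Topology Set

namespace VthetaAux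

variable {f : ℝ → ℝ}

/-- the primitive of `f` from `0`. -/
noncomputable def G (f : ℝ → ℝ) (t : ℝ) : ℝ := ∫ s in (0:ℝ)..t, f s

/-- the total mass on the right half line. -/
noncomputable def L (f : ℝ → ℝ) : ℝ := ∫ s in Set.Ioi (0:ℝ), f s

lemma G_cont (hf : Integrable f) : Continuous (G f) := hf.continuous_primitive 0

lemma G_mono (hf0 : ∀ x, 0 ≤ f x) (hf : Integrable f) : Monotone (G f) := by
  intro a b hab
  have h1 : G f b - G f a = ∫ s in a..b, f s := by
    rw [G, G, ← intervalIntegral.integral_add_adjacent_intervals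
      (hf.intervalIntegrable (a := 0) (b := a)) (hf.intervalIntegrable (a := a) (b := b))]
    ring
  have h2 : 0 ≤ ∫ s in a..b, f s :=
    intervalIntegral.integral_nonneg hab (fun u _ => hf0 u)
  linarith

lemma G_tendsto (hf : Integrable f) : Tendsto (G f) atTop (𝓝 (L f)) :=
  intervalIntegral_tendsto_integral_Ioi 0 hf.integrableOn tendsto_id

lemma G_le_L (hf0 : ∀ x, 0 ≤ f x) (hf : Integrable f) (t : ℝ) : G f t ≤ L f :=
  (G_mono hf0 hf).ge_of_tendsto (G_tendsto hf) t

lemma G_nonneg (hf0 : ∀ x, 0 ≤ f x) (hf : Integrable f) {t : ℝ} (ht : 0 ≤ t) : 0 ≤ G f t := by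
  have : G f 0 = 0 := intervalIntegral.integral_same
  simpa [this] using G_mono hf0 hf ht

end VthetaAux

namespace VthetaAux

lemma tendsto_div {y : ℝ} (hy : 0 < y) :
    Tendsto (fun θ : ℝ => y / (1 - θ)) (𝓝[Set.Ioo (0:ℝ) 1] 1) atTop := by
  have h1 : Tendsto (fun θ : ℝ => 1 - θ) (𝓝[Set.Ioo (0:ℝ) 1] 1) (𝓝[>] 0) := by
    rw [tendsto_nhdsWithin_iff]
    constructor
    · have hc : Continuous (fun θ : ℝ => 1 - θ) := by continuity
      have h := (hc.tendsto (1:ℝ)).mono_left (nhdsWithin_le_nhds (s := Set.Ioo (0:ℝ) 1))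
      simpa using h
    · filter_upwards [self_mem_nhdsWithin] with θ hθ
      exact sub_pos.2 hθ.2
  have h2 : Tendsto (fun θ : ℝ => (1 - θ)⁻¹) (𝓝[Set.Ioo (0:ℝ) 1] 1) atTop :=
    tendsto_inv_nhdsGT_zero.comp h1
  have h3 := h2.const_mul_atTop hy
  simpa [div_eq_mul_inv] using h3

lemma G_lim {f : ℝ → ℝ} (hf : Integrable f) {y : ℝ} (hy : 0 < y) :
    Tendsto (fun θ : ℝ => G f (y / (1 - θ))) (𝓝[Set.Ioo (0:ℝ) 1] 1) (𝓝 (L f)) :=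
  (G_tendsto hf).comp (tendsto_div hy)

lemma exp_lim {f : ℝ → ℝ} (hf : Integrable f) {y : ℝ} (hy : 0 < y) (c : ℝ) :
    Tendsto (fun θ : ℝ => Real.exp (c * G f (y / (1 - θ)))) (𝓝[Set.Ioo (0:ℝ) 1] 1)
      (𝓝 (Real.exp (c * L f))) :=
  (Real.continuous_exp.tendsto _).comp ((G_lim hf hy).const_mul c)

lemma psi_cont {f : ℝ → ℝ} (hf : Integrable f) (θ : ℝ) :
    Continuous fun y : ℝ => ∫ u in (0:ℝ)..y, Real.exp (-(2 * G f (u / (1 - θ)))) := by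
  have hc : Continuous fun u : ℝ => Real.exp (-(2 * G f (u / (1 - θ)))) :=
    Real.continuous_exp.comp ((continuous_const.mul ((G_cont hf).comp
      (continuous_id.div_const _))).neg)
  exact intervalIntegral.continuous_primitive (fun a b => hc.intervalIntegrable a b) 0

lemma psi_lim {f : ℝ → ℝ} (hf0 : ∀ x, 0 ≤ f x) (hf : Integrable f) {y : ℝ} (hy : 0 ≤ y) :
    Tendsto (fun θ : ℝ => ∫ u in (0:ℝ)..y, Real.exp (-(2 * G f (u / (1 - θ)))))
      (𝓝[Set.Ioo (0:ℝ) 1] 1) (𝓝 (y * Real.exp (-(2 * L f)))) := by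
  have key := intervalIntegral.tendsto_integral_filter_of_dominated_convergence
    (μ := volume) (a := 0) (b := y) (l := 𝓝[Set.Ioo (0:ℝ) 1] 1)
    (F := fun θ u => Real.exp (-(2 * G f (u / (1 - θ)))))
    (f := fun _ => Real.exp (-(2 * L f))) (bound := fun _ => 1)
    (by
      refine Eventually.of_forall fun θ => ?_
      exact (Real.continuous_exp.comp ((continuous_const.mul ((G_cont hf).comp
        (continuous_id.div_const _))).neg)).aestronglyMeasurable)
    (by
      filter_upwards [self_mem_nhdsWithin] with θ hθ
      refine Eventually.of_forall fun u hu => ?_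
      rw [Set.uIoc_of_le hy] at hu
      have hu0 : 0 ≤ u / (1 - θ) := div_nonneg hu.1.le (sub_pos.2 hθ.2).le
      have hGn : 0 ≤ G f (u / (1 - θ)) := G_nonneg hf0 hf hu0
      rw [Real.norm_eq_abs, abs_of_pos (Real.exp_pos _)]
      rw [Real.exp_le_one_iff]
      nlinarith)
    intervalIntegrable_const
    (by
      refine Eventually.of_forall fun u hu => ?_
      rw [Set.uIoc_of_le hy] at hu
      have := exp_lim hf hu.1 (-2)
      simpa [neg_mul] using this)
  have : (∫ _ in (0:ℝ)..y, Real.exp (-(2 * L f))) = y * Real.exp (-(2 * L f)) := by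
    simp [smul_eq_mul]
  rwa [this] at key

lemma h_lim {f : ℝ → ℝ} (hf0 : ∀ x, 0 ≤ f x) (hf : Integrable f) {y : ℝ} (hy : 0 < y) :
    Tendsto (fun θ : ℝ => (∫ u in (0:ℝ)..y, Real.exp (-(2 * G f (u / (1 - θ))))) *
      Real.exp (2 * G f (y / (1 - θ)))) (𝓝[Set.Ioo (0:ℝ) 1] 1) (𝓝 y) := by
  have := (psi_lim hf0 hf hy.le).mul (exp_lim hf hy 2)
  have heq : y * Real.exp (-(2 * L f)) * Real.exp (2 * L f) = y := by
    rw [mul_assoc, ← Real.exp_add]; simp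
  rwa [heq] at this

end VthetaAux

namespace VthetaAux

/-- The integrand after replacing `f |s|` by `f s`. -/
noncomputable def hfn (f : ℝ → ℝ) (θ : ℝ) (y : ℝ) : ℝ :=
  (∫ u in (0:ℝ)..y, Real.exp (-(2 * G f (u / (1 - θ))))) * Real.exp (2 * G f (y / (1 - θ)))

noncomputable def H (f : ℝ → ℝ) (θ : ℝ) (t : ℝ) : ℝ := ∫ y in (0:ℝ)..t, hfn f θ y

lemma hfn_cont {f : ℝ → ℝ} (hf : Integrable f) (θ : ℝ) : Continuous (hfn f θ) :=
  (psi_cont hf θ).mul (Real.continuous_exp.comp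
    (continuous_const.mul ((G_cont hf).comp (continuous_id.div_const _))))

lemma Gabs_eq {f : ℝ → ℝ} {t : ℝ} (ht : 0 ≤ t) :
    (∫ s in (0:ℝ)..t, f |s|) = G f t := by
  apply intervalIntegral.integral_congr
  intro s hs
  rw [Set.uIcc_of_le ht] at hs
  simp only [abs_of_nonneg hs.1]

lemma cont1 {f : ℝ → ℝ} (hf : Integrable f) (θ : ℝ) :
    Continuous fun u : ℝ => Real.exp (-(2 * G f (u / (1 - θ)))) :=
  Real.continuous_exp.comp ((continuous_const.mul ((G_cont hf).comp
    (continuous_id.div_const _))).neg)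

lemma vtheta_eq_H {f : ℝ → ℝ} {θ : ℝ} (hθ1 : 0 < 1 - θ) (t : ℝ) :
    vtheta f θ t = H f θ |t| := by
  show (∫ y in (0:ℝ)..|t|,
      (∫ u in (0:ℝ)..y, Real.exp (-(2 * ∫ s in (0:ℝ)..(u / (1 - θ)), f |s|))) *
        Real.exp (2 * ∫ u in (0:ℝ)..(y / (1 - θ)), f |u|)) = _
  apply intervalIntegral.integral_congr
  intro y hy
  rw [Set.uIcc_of_le (abs_nonneg t)] at hy
  have hy0 : 0 ≤ y := hy.1
  beta_reduce
  unfold hfn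
  congr 1
  · apply intervalIntegral.integral_congr
    intro u hu
    rw [Set.uIcc_of_le hy0] at hu
    beta_reduce
    rw [Gabs_eq (div_nonneg hu.1 hθ1.le)]
  · rw [Gabs_eq (div_nonneg hy0 hθ1.le)]

lemma H_hasDerivAt {f : ℝ → ℝ} (hf : Integrable f) (θ a : ℝ) :
    HasDerivAt (H f θ) (hfn f θ a) a :=
  ((hfn_cont hf θ).integral_hasStrictDerivAt 0 a).hasDerivAt

lemma hfn_bound {f : ℝ → ℝ} (hf0 : ∀ x, 0 ≤ f x) (hf : Integrable f) {θ : ℝ}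
    (hθ : θ ∈ Set.Ioo (0:ℝ) 1) {y : ℝ} (hy0 : 0 ≤ y) :
    hfn f θ y ∈ Set.Icc 0 (y * Real.exp (2 * L f)) := by
  have hθ1 : 0 < 1 - θ := sub_pos.2 hθ.2
  have hψ0 : 0 ≤ ∫ u in (0:ℝ)..y, Real.exp (-(2 * G f (u / (1 - θ)))) :=
    intervalIntegral.integral_nonneg hy0 (fun u _ => (Real.exp_pos _).le)
  have hψy : (∫ u in (0:ℝ)..y, Real.exp (-(2 * G f (u / (1 - θ))))) ≤ y := by
    have h1 : (∫ u in (0:ℝ)..y, Real.exp (-(2 * G f (u / (1 - θ))))) ≤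
        ∫ _ in (0:ℝ)..y, (1:ℝ) := by
      apply intervalIntegral.integral_mono_on hy0
        ((cont1 hf θ).intervalIntegrable 0 y) intervalIntegrable_const
      intro u hu
      have hGn : 0 ≤ G f (u / (1 - θ)) := G_nonneg hf0 hf (div_nonneg hu.1 hθ1.le)
      rw [Real.exp_le_one_iff]
      nlinarith
    simpa using h1
  have hE : Real.exp (2 * G f (y / (1 - θ))) ≤ Real.exp (2 * L f) := by
    have := G_le_L hf0 hf (y / (1 - θ))
    exact Real.exp_le_exp.2 (by nlinarith)
  constructor
  · exact mul_nonneg hψ0 (Real.exp_pos _).le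
  · exact mul_le_mul hψy hE (Real.exp_pos _).le hy0

lemma part1 {f : ℝ → ℝ} (hf0 : ∀ x, 0 ≤ f x) (hf : Integrable f) (x : ℝ) :
    Tendsto (fun θ : ℝ => H f θ |x|) (𝓝[Set.Ioo (0:ℝ) 1] 1) (𝓝 (x ^ 2 / 2)) := by
  have key := intervalIntegral.tendsto_integral_filter_of_dominated_convergence
    (μ := volume) (a := 0) (b := |x|) (l := 𝓝[Set.Ioo (0:ℝ) 1] 1)
    (F := fun θ y => hfn f θ y) (f := fun y => y)
    (bound := fun _ => |x| * Real.exp (2 * L f))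
    (Eventually.of_forall fun θ => (hfn_cont hf θ).aestronglyMeasurable)
    (by
      filter_upwards [self_mem_nhdsWithin] with θ hθ
      refine Eventually.of_forall fun y hy => ?_
      rw [Set.uIoc_of_le (abs_nonneg x)] at hy
      obtain ⟨h0, h1⟩ := hfn_bound hf0 hf hθ hy.1.le
      rw [Real.norm_eq_abs, abs_of_nonneg h0]
      refine h1.trans ?_
      exact mul_le_mul_of_nonneg_right hy.2 (Real.exp_pos _).le)
    intervalIntegrable_const
    (by
      refine Eventually.of_forall fun y hy => ?_
      rw [Set.uIoc_of_le (abs_nonneg x)] at hy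
      exact h_lim hf0 hf hy.1)
  have hid : (∫ y in (0:ℝ)..|x|, y) = x ^ 2 / 2 := by
    rw [integral_id]
    rw [sq_abs]
    ring
  rw [hid] at key
  exact key

end VthetaAux

namespace VthetaAux

lemma deriv_pos {f : ℝ → ℝ} (hf : Integrable f) {θ x : ℝ} (hθ1 : 0 < 1 - θ)
    (hx : 0 < x) : deriv (vtheta f θ) x = hfn f θ x := by
  have hev : vtheta f θ =ᶠ[𝓝 x] H f θ := by
    filter_upwards [isOpen_Ioi.mem_nhds hx] with t ht
    rw [vtheta_eq_H hθ1, abs_of_pos ht]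
  rw [hev.deriv_eq, (H_hasDerivAt hf θ x).deriv]

lemma deriv_neg {f : ℝ → ℝ} (hf : Integrable f) {θ x : ℝ} (hθ1 : 0 < 1 - θ)
    (hx : x < 0) : deriv (vtheta f θ) x = -hfn f θ (-x) := by
  have hev : vtheta f θ =ᶠ[𝓝 x] fun t => H f θ (-t) := by
    filter_upwards [isOpen_Iio.mem_nhds hx] with t ht
    rw [vtheta_eq_H hθ1, abs_of_neg ht]
  have hd : HasDerivAt (fun t => H f θ (-t)) (hfn f θ (-x) * (-1)) x :=
    (H_hasDerivAt hf θ (-x)).comp x (hasDerivAt_neg x)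
  rw [hev.deriv_eq, hd.deriv]
  ring

lemma hfn_zero (f : ℝ → ℝ) (θ : ℝ) : hfn f θ 0 = 0 := by
  simp [hfn]

lemma deriv_zero {f : ℝ → ℝ} (hf : Integrable f) {θ : ℝ} (hθ1 : 0 < 1 - θ) :
    deriv (vtheta f θ) 0 = 0 := by
  have hH : HasDerivAt (H f θ) 0 0 := by
    have := H_hasDerivAt hf θ 0
    rwa [hfn_zero] at this
  have ho : (fun t : ℝ => H f θ t - H f θ 0) =o[𝓝 0] fun t : ℝ => t := by
    have := hasDerivAt_iff_isLittleO.1 hH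
    simpa using this
  have habs : Tendsto (fun t : ℝ => |t|) (𝓝 0) (𝓝 0) :=
    continuous_abs.tendsto' 0 0 abs_zero
  have ho2 : (fun t : ℝ => H f θ |t| - H f θ 0) =o[𝓝 0] fun t : ℝ => |t| :=
    ho.comp_tendsto habs
  have hbig : (fun t : ℝ => |t|) =O[𝓝 (0:ℝ)] fun t : ℝ => t := by
    rw [Asymptotics.isBigO_iff]
    exact ⟨1, Eventually.of_forall fun t => by simp⟩
  have ho3 : (fun t : ℝ => H f θ |t| - H f θ 0) =o[𝓝 0] fun t : ℝ => t :=
    ho2.trans_isBigO hbig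
  have hd : HasDerivAt (vtheta f θ) 0 0 := by
    rw [hasDerivAt_iff_isLittleO]
    have he1 : (fun t : ℝ => vtheta f θ t - vtheta f θ 0 - (t - 0) • (0:ℝ)) =
        fun t : ℝ => H f θ |t| - H f θ 0 := by
      funext t
      rw [vtheta_eq_H hθ1, vtheta_eq_H hθ1]
      simp
    rw [he1]
    simpa using ho3
  exact hd.deriv

end VthetaAux


open VthetaAux

theorem vtheta_limits (f : ℝ → ℝ) (hf0 : ∀ x, 0 ≤ f x) (hf : Integrable f)
    (hb : BddOnCompacts f) (x : ℝ) :
    Tendsto (fun θ : ℝ => vtheta f θ x)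
      (nhdsWithin 1 (Set.Ioo (0:ℝ) 1)) (nhds (x ^ 2 / 2)) ∧
    Tendsto (fun θ : ℝ => deriv (vtheta f θ) x)
      (nhdsWithin 1 (Set.Ioo (0:ℝ) 1)) (nhds x) := by
  constructor
  · refine (part1 hf0 hf x).congr' ?_
    filter_upwards [self_mem_nhdsWithin] with θ hθ
    exact (vtheta_eq_H (sub_pos.2 hθ.2) x).symm
  · rcases lt_trichotomy x 0 with hx | hx | hx
    · have hlim : Tendsto (fun θ : ℝ => -hfn f θ (-x)) (𝓝[Set.Ioo (0:ℝ) 1] 1) (𝓝 x) := by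
        have := (h_lim hf0 hf (neg_pos.2 hx)).neg
        simpa [hfn] using this
      refine hlim.congr' ?_
      filter_upwards [self_mem_nhdsWithin] with θ hθ
      exact (deriv_neg hf (sub_pos.2 hθ.2) hx).symm
    · subst hx
      have hlim : Tendsto (fun _ : ℝ => (0:ℝ)) (𝓝[Set.Ioo (0:ℝ) 1] 1) (𝓝 0) :=
        tendsto_const_nhds
      refine hlim.congr' ?_
      filter_upwards [self_mem_nhdsWithin] with θ hθ
      exact (deriv_zero hf (sub_pos.2 hθ.2)).symm
    · refine (h_lim hf0 hf hx).congr' ?_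
      filter_upwards [self_mem_nhdsWithin] with θ hθ
      exact (deriv_pos hf (sub_pos.2 hθ.2) hx).symm
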